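/- In Shamir's (t+1)-out-of-n secret sharing over Z_p (p prime, p > n), if a secret s is shared via a uniformly random polynomial q of degree at most t with q(0) = s, then for every subset of at most t parties, the joint distribution of their shares (q(i))_{i in the subset} is independent of s; equivalently, for any two secrets s and s', the distributions of the shares held by those t parties are identical. -/
import Mathlib

open Finset Polynomial

/-- There is a coefficient vector `c` (for a polynomial with zero constant term and degree
at most `t`) whose associated polynomial takes the value `d` at all points `α i`, `i ∈ I`. -/
lemma shamir_exists_c (p : ℕ) [Fact p.Prime] (t n : ℕ)
    (α : Fin n → ZMod p) (hα0 : ∀ i, α i ≠ 0)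
    (I : Finset (Fin n)) (hI : I.card ≤ t) (d : ZMod p) :
    ∃ c : Fin t → ZMod p, ∀ i ∈ I, ∑ j : Fin t, c j * (α i) ^ ((j : ℕ) + 1) = d := by
  set f : Polynomial (ZMod p) := C d * (1 - ∏ i ∈ I, (1 - C (α i)⁻¹ * X)) with hf
  have hdeg : f.natDegree ≤ t := by
    refine le_trans (natDegree_C_mul_le _ _) ?_
    refine le_trans (natDegree_sub_le _ _) ?_
    simp only [natDegree_one, max_le_iff]
    constructor
    · exact Nat.zero_le t
    · refine le_trans (natDegree_prod_le _ _) (le_trans ?_ hI)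
      calc ∑ i ∈ I, (1 - C (α i)⁻¹ * X).natDegree
          ≤ ∑ i ∈ I, 1 := by
            refine Finset.sum_le_sum fun i _ => ?_
            refine le_trans (natDegree_sub_le _ _) ?_
            simp only [natDegree_one, max_le_iff]
            exact ⟨Nat.zero_le 1, (natDegree_C_mul_le _ X).trans (natDegree_X_le (R := ZMod p))⟩
        _ = I.card := by simp
  have h0 : f.coeff 0 = 0 := by
    rw [coeff_zero_eq_eval_zero, hf]
    simp [eval_prod]
  have heval : ∀ i ∈ I, f.eval (α i) = d := by
    intro i hi
    rw [hf]
    have : ∏ j ∈ I, (1 - (α j)⁻¹ * (α i)) = 0 := by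
      refine Finset.prod_eq_zero hi ?_
      rw [inv_mul_cancel₀ (hα0 i)]; ring
    simp [eval_prod, this]
  refine ⟨fun j => f.coeff ((j : ℕ) + 1), fun i hi => ?_⟩
  rw [← heval i hi, eval_eq_sum_range' (lt_of_le_of_lt hdeg (Nat.lt_succ_self t)),
    Finset.sum_range_succ']
  simp only [h0, pow_zero, zero_mul, add_zero]
  rw [Fin.sum_univ_eq_sum_range (fun j => f.coeff (j + 1) * (α i) ^ (j + 1))]

/-- Shamir (t+1)-out-of-n secret sharing privacy: for any set `I` of at most `t` parties
(with distinct nonzero evaluation points `α i` in `ZMod p`, `p > n` prime), the number of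
random coefficient vectors producing any given vector of shares for the parties in `I`
is the same for the secret `s` as for the secret `s'`; hence the joint distribution of the
shares held by those parties is identical for the two secrets. -/
theorem shamir_privacy (p : ℕ) [Fact p.Prime] (t n : ℕ) (hn : n < p)
    (α : Fin n → ZMod p) (hα : Function.Injective α) (hα0 : ∀ i, α i ≠ 0)
    (I : Finset (Fin n)) (hI : I.card ≤ t) (s s' : ZMod p)
    (v : Fin n → ZMod p) :
    Nat.card {a : Fin t → ZMod p //
        ∀ i ∈ I, (s + ∑ j : Fin t, a j * (α i) ^ ((j : ℕ) + 1)) = v i}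
      = Nat.card {a : Fin t → ZMod p //
        ∀ i ∈ I, (s' + ∑ j : Fin t, a j * (α i) ^ ((j : ℕ) + 1)) = v i} := by
  obtain ⟨c, hc⟩ := shamir_exists_c p t n α hα0 I hI (s - s')
  refine Nat.card_congr (Equiv.subtypeEquiv (Equiv.addRight c) fun a => ?_)
  refine forall₂_congr fun i hi => ?_
  have : ∑ j : Fin t, (a + c) j * (α i) ^ ((j : ℕ) + 1)
      = (∑ j : Fin t, a j * (α i) ^ ((j : ℕ) + 1)) + (s - s') := by
    rw [← hc i hi, ← Finset.sum_add_distrib]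
    simp [add_mul]
  simp only [Equiv.coe_addRight, this]
  constructor <;> intro h <;> [rw [← h]; rw [← h]] <;> ring
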